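/- Let H_1, …, H_m be a finite family of pairwise distinct affine hyperplanes in ℝ^d which is in general position. Then the number of connected components of ℝ^d ∖ (H_1 ∪ ⋯ ∪ H_m) is exactly ∑_{i=0}^{d} C(m, i). -/

import Mathlib

/-- An affine hyperplane in ℝ^d: a set of the form {x : ⟨w,x⟩ = c} with w ≠ 0. -/
def IsHyperplane {d : ℕ} (H : Set (Fin d → ℝ)) : Prop :=
  ∃ w : Fin d → ℝ, w ≠ 0 ∧ ∃ c : ℝ, H = {x | ∑ i, w i * x i = c}

/-- The set of connected components of a subset `S` of a topological space. -/
def components {X : Type*} [TopologicalSpace X] (S : Set X) : Set (Set X) :=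
  {C | ∃ x ∈ S, C = connectedComponentIn S x}

/-- A family of hyperplanes in ℝ^d is in general position if every subfamily of size
`r ≤ d` intersects in a (nonempty) affine subspace of dimension `d - r`, and every
subfamily of size `r > d` has empty intersection. -/
def InGeneralPosition {d m : ℕ} (H : Fin m → Set (Fin d → ℝ)) : Prop :=
  ∀ S : Finset (Fin m),
    (S.card ≤ d →
      ∃ A : AffineSubspace ℝ (Fin d → ℝ), (A : Set (Fin d → ℝ)) = ⋂ i ∈ S, H i ∧
        (A : Set (Fin d → ℝ)).Nonempty ∧ Module.finrank ℝ A.direction = d - S.card) ∧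
    (d < S.card → ⋂ i ∈ S, H i = ∅)

namespace Chambers
open Finset
variable {d : ℕ}

def fsum (w x : Fin d → ℝ) : ℝ := ∑ j, w j * x j
def Hset (w : Fin d → ℝ) (c : ℝ) : Set (Fin d → ℝ) := {x | fsum w x = c}
def SSide (b : Bool) (w : Fin d → ℝ) (c : ℝ) (x : Fin d → ℝ) : Prop :=
  if b then c < fsum w x else fsum w x < c

noncomputable def ReachSet {m : ℕ} (s : Set (Fin d → ℝ)) (w : Fin m → Fin d → ℝ)
    (c : Fin m → ℝ) : Finset (Fin m → Bool) :=
  @Finset.filter _ (fun ε => ∃ x ∈ s, ∀ i, SSide (ε i) (w i) (c i) x)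
    (fun _ => Classical.propDecidable _) Finset.univ

lemma mem_ReachSet {m : ℕ} {s : Set (Fin d → ℝ)} {w : Fin m → Fin d → ℝ} {c : Fin m → ℝ}
    {ε : Fin m → Bool} :
    ε ∈ ReachSet s w c ↔ ∃ x ∈ s, ∀ i, SSide (ε i) (w i) (c i) x := by
  simp [ReachSet, Finset.mem_filter]

def GPon (A : AffineSubspace ℝ (Fin d → ℝ)) (n : ℕ) {m : ℕ} (w : Fin m → Fin d → ℝ)
    (c : Fin m → ℝ) : Prop :=
  ∀ S : Finset (Fin m),
    (S.card ≤ n → ∃ B : AffineSubspace ℝ (Fin d → ℝ),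
      (B : Set (Fin d → ℝ)) = (A : Set (Fin d → ℝ)) ∩ ⋂ i ∈ S, Hset (w i) (c i) ∧
      (B : Set (Fin d → ℝ)).Nonempty ∧ Module.finrank ℝ B.direction = n - S.card) ∧
    (n < S.card → (A : Set (Fin d → ℝ)) ∩ ⋂ i ∈ S, Hset (w i) (c i) = ∅)

lemma biInter_map_castSucc {m : ℕ} (S : Finset (Fin m)) (g : Fin (m + 1) → Set (Fin d → ℝ)) :
    ⋂ i ∈ S.map Fin.castSuccEmb, g i = ⋂ i ∈ S, g i.castSucc := by
  ext x; simp only [Set.mem_iInter, Finset.mem_map]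
  constructor
  · intro h i hi; exact h _ ⟨i, hi, rfl⟩
  · rintro h j ⟨i, hi, rfl⟩; exact h i hi

lemma fsum_sub (w x y : Fin d → ℝ) : fsum w (x - y) = fsum w x - fsum w y := by
  simp [fsum, mul_sub, Finset.sum_sub_distrib]

lemma fsum_add_smul (w x v : Fin d → ℝ) (t : ℝ) :
    fsum w (x + t • v) = fsum w x + t * fsum w v := by
  simp only [fsum, Finset.mul_sum, ← Finset.sum_add_distrib]
  exact Finset.sum_congr rfl fun j _ => by
    simp only [Pi.add_apply, Pi.smul_apply, smul_eq_mul]; ring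

lemma fsum_continuous (w : Fin d → ℝ) : Continuous (fsum w) := by
  unfold fsum; fun_prop

lemma fsum_isLinear (w : Fin d → ℝ) : IsLinearMap ℝ (fsum w) := by
  constructor
  · intro x y; simp [fsum, mul_add, Finset.sum_add_distrib]
  · intro t x
    simp only [fsum, Pi.smul_apply, smul_eq_mul, Finset.mul_sum]
    exact Finset.sum_congr rfl fun j _ => by ring

lemma convex_sside (b : Bool) (w : Fin d → ℝ) (c : ℝ) : Convex ℝ {x | SSide b w c x} := by
  cases b
  · simpa [SSide] using convex_halfSpace_lt (fsum_isLinear w) c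
  · simpa [SSide] using convex_halfSpace_gt (fsum_isLinear w) c

lemma isOpen_sside (b : Bool) (w : Fin d → ℝ) (c : ℝ) : IsOpen {x | SSide b w c x} := by
  cases b
  · simpa [SSide] using isOpen_lt (fsum_continuous w) continuous_const
  · simpa [SSide] using isOpen_lt continuous_const (fsum_continuous w)

lemma crossing {m : ℕ} (w : Fin m → Fin d → ℝ) (c : Fin m → ℝ)
    (wl : Fin d → ℝ) (cl : ℝ) (A : AffineSubspace ℝ (Fin d → ℝ)) (ε : Fin m → Bool)
    (x y : Fin d → ℝ) (hx : x ∈ A) (hy : y ∈ A)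
    (hεx : ∀ i, SSide (ε i) (w i) (c i) x) (hεy : ∀ i, SSide (ε i) (w i) (c i) y)
    (hxl : fsum wl x < cl) (hyl : cl < fsum wl y) :
    ∃ z ∈ (A : Set (Fin d → ℝ)), fsum wl z = cl ∧ ∀ i, SSide (ε i) (w i) (c i) z := by
  set t : ℝ := (cl - fsum wl x) / (fsum wl y - fsum wl x) with ht
  have hd : 0 < fsum wl y - fsum wl x := by linarith
  have ht0 : 0 < t := div_pos (by linarith) hd
  have ht1 : t < 1 := (div_lt_one hd).2 (by linarith)
  refine ⟨x + t • (y - x), ?_, ?_, ?_⟩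
  · have hv : t • (y - x) ∈ A.direction :=
      A.direction.smul_mem t (AffineSubspace.vsub_mem_direction hy hx)
    have := AffineSubspace.vadd_mem_of_mem_direction hv hx
    simpa [vadd_eq_add, add_comm] using this
  · rw [fsum_add_smul, fsum_sub, ht]
    field_simp
    ring
  · intro i
    have h := hεx i
    have h' := hεy i
    cases hb : ε i <;> rw [hb] at h h' <;>
      simp only [SSide, if_true, if_false, Bool.false_eq_true] at h h' ⊢ <;>
      rw [fsum_add_smul, fsum_sub] <;> nlinarith

lemma perturb {m : ℕ} (w : Fin m → Fin d → ℝ) (c : Fin m → ℝ)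
    (wl : Fin d → ℝ) (cl : ℝ) (A : AffineSubspace ℝ (Fin d → ℝ)) (ε : Fin m → Bool)
    (v : Fin d → ℝ) (hv : v ∈ A.direction) (hα : fsum wl v ≠ 0)
    (x : Fin d → ℝ) (hx : x ∈ A) (hxl : fsum wl x = cl)
    (hε : ∀ i, SSide (ε i) (w i) (c i) x) (b : Bool) :
    ∃ y ∈ (A : Set (Fin d → ℝ)), (∀ i, SSide (ε i) (w i) (c i) y) ∧ SSide b wl cl y := by
  set U : Set (Fin d → ℝ) := ⋂ i, {z | SSide (ε i) (w i) (c i) z} with hU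
  have hUopen : IsOpen U := isOpen_iInter_of_finite fun i => isOpen_sside _ _ _
  have hxU : x ∈ U := Set.mem_iInter.2 hε
  have hcont : Continuous (fun t : ℝ => x + t • v) := by fun_prop
  have hpre : IsOpen ((fun t : ℝ => x + t • v) ⁻¹' U) := hUopen.preimage hcont
  have h0 : (0 : ℝ) ∈ (fun t : ℝ => x + t • v) ⁻¹' U := by simpa using hxU
  obtain ⟨δ, hδ, hball⟩ := Metric.isOpen_iff.1 hpre 0 h0
  have key : ∀ s : ℝ, |s| < δ → x + s • v ∈ U := fun s hs =>
    hball (by simpa [Real.dist_eq] using hs)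
  set α := fsum wl v
  have hsign : ∃ t : ℝ, |t| < δ ∧ (if b then 0 < t * α else t * α < 0) := by
    rcases lt_or_gt_of_ne hα with hneg | hpos
    · refine ⟨if b then -(δ/2) else δ/2, ?_, ?_⟩
      · cases b <;> simp [abs_of_pos, abs_of_neg, hδ]
      · cases b <;> simp only [if_true, if_false, Bool.false_eq_true] <;> nlinarith
    · refine ⟨if b then δ/2 else -(δ/2), ?_, ?_⟩
      · cases b <;> simp [abs_of_pos, abs_of_neg, hδ]
      · cases b <;> simp only [if_true, if_false, Bool.false_eq_true] <;> nlinarith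
  obtain ⟨t, htδ, htsign⟩ := hsign
  refine ⟨x + t • v, ?_, ?_, ?_⟩
  · have hv' : t • v ∈ A.direction := A.direction.smul_mem t hv
    have := AffineSubspace.vadd_mem_of_mem_direction hv' hx
    simpa [vadd_eq_add, add_comm] using this
  · exact Set.mem_iInter.1 (key t htδ)
  · cases b <;> simp only [SSide, if_true, if_false, Bool.false_eq_true] at htsign ⊢ <;>
      rw [fsum_add_smul] <;> rw [hxl] <;> linarith

lemma exists_transverse (A B : AffineSubspace ℝ (Fin d → ℝ)) (wl : Fin d → ℝ) (cl : ℝ)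
    (hB : (B : Set (Fin d → ℝ)) = (A : Set (Fin d → ℝ)) ∩ Hset wl cl)
    (hBne : (B : Set (Fin d → ℝ)).Nonempty)
    (hrank : Module.finrank ℝ B.direction < Module.finrank ℝ A.direction) :
    ∃ v ∈ A.direction, fsum wl v ≠ 0 := by
  by_contra h
  push_neg at h
  obtain ⟨x₀, hx₀⟩ := hBne
  rw [hB] at hx₀
  have hsub : (A : Set (Fin d → ℝ)) ⊆ Hset wl cl := by
    intro x hx
    have hdd : x - x₀ ∈ A.direction := by
      have := AffineSubspace.vsub_mem_direction hx hx₀.1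
      simpa [vsub_eq_sub] using this
    have h0 := h _ hdd
    rw [fsum_sub] at h0
    have : fsum wl x = fsum wl x₀ := by linarith
    rw [Hset, Set.mem_setOf_eq, this]
    exact hx₀.2
  have hBA : (B : Set (Fin d → ℝ)) = (A : Set (Fin d → ℝ)) := by
    rw [hB]
    exact Set.inter_eq_left.2 hsub
  have : B = A := SetLike.coe_injective hBA
  rw [this] at hrank
  exact lt_irrefl _ hrank

lemma pascal_sum (m n : ℕ) :
    ∑ i ∈ range (n + 1), (m + 1).choose i
      = ∑ i ∈ range (n + 1), m.choose i + ∑ i ∈ range n, m.choose i := by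
  induction n with
  | zero => simp
  | succ n ih =>
      have h1 := Finset.sum_range_succ (fun i => (m + 1).choose i) (n + 1)
      have h2 := Finset.sum_range_succ (fun i => m.choose i) (n + 1)
      have h3 := Finset.sum_range_succ (fun i => m.choose i) n
      have h4 : (m + 1).choose (n + 1) = m.choose n + m.choose (n + 1) :=
        Nat.choose_succ_succ m n
      omega

lemma sum_choose_zero (n : ℕ) : ∑ i ∈ range (n + 1), Nat.choose 0 i = 1 := by
  induction n with
  | zero => simp
  | succ n ih =>
      rw [Finset.sum_range_succ, ih, Nat.choose_eq_zero_of_lt (Nat.succ_pos n)]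

lemma count : ∀ (m n : ℕ) (A : AffineSubspace ℝ (Fin d → ℝ)) (w : Fin m → Fin d → ℝ)
    (c : Fin m → ℝ), GPon A n w c →
    (ReachSet (A : Set (Fin d → ℝ)) w c).card = ∑ i ∈ range (n + 1), m.choose i := by
  intro m
  induction m with
  | zero =>
      intro n A w c hGP
      obtain ⟨B, hB, hne, -⟩ := (hGP ∅).1 (Nat.zero_le n)
      simp only [Finset.notMem_empty, Set.iInter_of_empty, Set.iInter_false,
        Set.iInter_univ, Set.inter_univ] at hB
      have hAne : (A : Set (Fin d → ℝ)).Nonempty := hB ▸ hne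
      obtain ⟨x₀, hx₀⟩ := hAne
      have hall : ∀ ε : Fin 0 → Bool, ε ∈ ReachSet (A : Set (Fin d → ℝ)) w c := by
        intro ε; exact mem_ReachSet.2 ⟨x₀, hx₀, fun i => i.elim0⟩
      have : ReachSet (A : Set (Fin d → ℝ)) w c = Finset.univ :=
        Finset.eq_univ_iff_forall.2 hall
      rw [this]
      have h1 : (Finset.univ : Finset (Fin 0 → Bool)).card = 1 := by
        simp
      rw [h1, sum_choose_zero]
  | succ m ih =>
      intro n A w c hGP
      classical
      set w' : Fin m → Fin d → ℝ := fun i => w i.castSucc with hw'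
      set c' : Fin m → ℝ := fun i => c i.castSucc with hc'
      set wl : Fin d → ℝ := w (Fin.last m) with hwl
      set cl : ℝ := c (Fin.last m) with hcl
      set R : Finset (Fin (m + 1) → Bool) := ReachSet (A : Set (Fin d → ℝ)) w c with hR
      set R' : Finset (Fin m → Bool) := ReachSet (A : Set (Fin d → ℝ)) w' c' with hR'
      set T : Finset (Fin m → Bool) :=
        ReachSet ((A : Set (Fin d → ℝ)) ∩ Hset wl cl) w' c' with hT
      -- facts from GP at ∅
      obtain ⟨A₀, hA₀, hA₀ne, hA₀rk⟩ := (hGP ∅).1 (Nat.zero_le n)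
      simp only [Finset.notMem_empty, Set.iInter_of_empty, Set.iInter_false,
        Set.iInter_univ, Set.inter_univ] at hA₀
      have hA₀A : A₀ = A := SetLike.coe_injective hA₀
      rw [hA₀A] at hA₀rk hA₀ne
      -- GP at {last}
      have hsingle := hGP {Fin.last m}
      rw [Finset.card_singleton] at hsingle
      have hsingle_inter : ⋂ i ∈ ({Fin.last m} : Finset (Fin (m + 1))), Hset (w i) (c i)
          = Hset wl cl := by simp [hwl, hcl]
      rw [hsingle_inter] at hsingle
      -- deletion is in general position
      have hdel : GPon A n w' c' := by
        intro S
        have h := hGP (S.map Fin.castSuccEmb)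
        rw [Finset.card_map, biInter_map_castSucc] at h
        exact h
      have hcardR' : R'.card = ∑ i ∈ range (n + 1), m.choose i := ih n A w' c' hdel
      -- helper: unfolding snoc signs
      have sside_snoc : ∀ (ε' : Fin m → Bool) (b : Bool) (y : Fin d → ℝ),
          (∀ i : Fin (m + 1), SSide ((Fin.snoc ε' b : Fin (m+1) → Bool) i) (w i) (c i) y) ↔
          ((∀ i : Fin m, SSide (ε' i) (w' i) (c' i) y) ∧ SSide b wl cl y) := by
        intro ε' b y
        constructor
        · intro h
          refine ⟨fun i => ?_, ?_⟩
          · have := h i.castSucc; rwa [Fin.snoc_castSucc] at this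
          · have := h (Fin.last m); rwa [Fin.snoc_last] at this
        · rintro ⟨h1, h2⟩ i
          refine Fin.lastCases ?_ (fun j => ?_) i
          · rwa [Fin.snoc_last]
          · rw [Fin.snoc_castSucc]; exact h1 j
      -- both extensions realizable implies the chamber meets the last hyperplane
      have hboth : ∀ ε' : Fin m → Bool,
          (Fin.snoc ε' true : Fin (m+1) → Bool) ∈ R → (Fin.snoc ε' false : Fin (m+1) → Bool) ∈ R → ε' ∈ T := by
        intro ε' h1 h0
        obtain ⟨y, hyA, hys⟩ := mem_ReachSet.1 h1
        obtain ⟨x, hxA, hxs⟩ := mem_ReachSet.1 h0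
        rw [sside_snoc] at hys hxs
        have hyl : cl < fsum wl y := by
          have := hys.2; simpa [SSide] using this
        have hxl : fsum wl x < cl := by
          have := hxs.2; simpa [SSide] using this
        obtain ⟨z, hzA, hzl, hzs⟩ :=
          crossing w' c' wl cl A ε' x y hxA hyA hxs.1 hys.1 hxl hyl
        exact mem_ReachSet.2 ⟨z, ⟨hzA, hzl⟩, hzs⟩
      have hTsub : T ⊆ R' := by
        intro ε' hε'
        obtain ⟨x, hx, hs⟩ := mem_ReachSet.1 hε'
        exact mem_ReachSet.2 ⟨x, hx.1, hs⟩
      -- the key case analysis on n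
      have hkey : (∀ ε' ∈ T, ∀ b : Bool, (Fin.snoc ε' b : Fin (m+1) → Bool) ∈ R) ∧
          T.card = ∑ i ∈ range n, m.choose i := by
        rcases n with _ | n'
        · have hempty : (A : Set (Fin d → ℝ)) ∩ Hset wl cl = ∅ :=
            hsingle.2 Nat.one_pos
          have hTe : T = ∅ := by
            rw [Finset.eq_empty_iff_forall_notMem]
            intro ε' hε'
            obtain ⟨x, hx, -⟩ := mem_ReachSet.1 hε'
            rw [hempty] at hx
            exact hx
          exact ⟨by rw [hTe]; intro ε' h; exact absurd h (Finset.notMem_empty _),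
            by rw [hTe]; simp⟩
        · obtain ⟨B, hB, hBne, hBrk⟩ := hsingle.1 (Nat.one_le_iff_ne_zero.2 (Nat.succ_ne_zero n'))
          have hArk : Module.finrank ℝ A.direction = n' + 1 := by simpa using hA₀rk
          have hBrk' : Module.finrank ℝ B.direction = n' := by simpa using hBrk
          obtain ⟨v, hv, hα⟩ := exists_transverse A B wl cl hB hBne
            (by rw [hArk, hBrk']; omega)
          constructor
          · intro ε' hε' b
            obtain ⟨x, ⟨hxA, hxH⟩, hs⟩ := mem_ReachSet.1 hε'
            obtain ⟨y, hyA, hys, hyb⟩ :=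
              perturb w' c' wl cl A ε' v hv hα x hxA hxH hs b
            exact mem_ReachSet.2 ⟨y, hyA, (sside_snoc ε' b y).2 ⟨hys, hyb⟩⟩
          · -- induced arrangement on B is in general position
            have hGPB : GPon B n' w' c' := by
              intro S
              have hlast_nm : Fin.last m ∉ S.map Fin.castSuccEmb := by
                simp only [Finset.mem_map]
                rintro ⟨i, -, hi⟩
                exact absurd hi (Fin.castSucc_lt_last i).ne
              have hcardins : (insert (Fin.last m) (S.map Fin.castSuccEmb)).card
                  = S.card + 1 := by
                rw [Finset.card_insert_of_notMem hlast_nm, Finset.card_map]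
              have hinter : (A : Set (Fin d → ℝ)) ∩
                  ⋂ i ∈ insert (Fin.last m) (S.map Fin.castSuccEmb), Hset (w i) (c i)
                  = (B : Set (Fin d → ℝ)) ∩ ⋂ i ∈ S, Hset (w' i) (c' i) := by
                rw [Finset.set_biInter_insert, biInter_map_castSucc, ← Set.inter_assoc, ← hB]
              constructor
              · intro hcard
                obtain ⟨B₂, hB₂, hne₂, hrk₂⟩ :=
                  (hGP (insert (Fin.last m) (S.map Fin.castSuccEmb))).1
                    (by rw [hcardins]; omega)
                refine ⟨B₂, ?_, hne₂, ?_⟩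
                · rw [hB₂, hinter]
                · rw [hrk₂, hcardins]; omega
              · intro hcard
                have := (hGP (insert (Fin.last m) (S.map Fin.castSuccEmb))).2
                  (by rw [hcardins]; omega)
                rw [hinter] at this
                exact this
            have hTB : T = ReachSet (B : Set (Fin d → ℝ)) w' c' := by
              rw [hT, hB]
            rw [hTB]
            exact ih n' B w' c' hGPB
      -- fiber cardinality
      have hmapsto : ∀ ε ∈ R, Fin.init ε ∈ R' := by
        intro ε hε
        obtain ⟨x, hx, hs⟩ := mem_ReachSet.1 hε
        exact mem_ReachSet.2 ⟨x, hx, fun i => hs i.castSucc⟩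
      have hfiber : ∀ ε' ∈ R',
          (R.filter (fun ε => Fin.init ε = ε')).card = if ε' ∈ T then 2 else 1 := by
        intro ε' hε'
        by_cases hTm : ε' ∈ T
        · rw [if_pos hTm]
          have h2 := hkey.1 ε' hTm
          have hset : R.filter (fun ε => Fin.init ε = ε')
              = ({Fin.snoc ε' true, Fin.snoc ε' false} : Finset (Fin (m+1) → Bool)) := by
            ext ε
            simp only [Finset.mem_filter, Finset.mem_insert, Finset.mem_singleton]
            constructor
            · rintro ⟨hεR, rfl⟩
              rcases Bool.dichotomy (ε (Fin.last m)) with hb | hb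
              · right; rw [← hb, Fin.snoc_init_self]
              · left; rw [← hb, Fin.snoc_init_self]
            · rintro (rfl | rfl)
              · exact ⟨h2 true, Fin.init_snoc _ _⟩
              · exact ⟨h2 false, Fin.init_snoc _ _⟩
          rw [hset]
          rw [Finset.card_insert_of_notMem, Finset.card_singleton]
          simp only [Finset.mem_singleton]
          intro h
          have := congrFun h (Fin.last m)
          simp [Fin.snoc_last] at this
        · rw [if_neg hTm]
          obtain ⟨x, hxA, hxs⟩ := mem_ReachSet.1 hε'
          have hxl : fsum wl x ≠ cl := by
            intro h
            exact hTm (mem_ReachSet.2 ⟨x, ⟨hxA, h⟩, hxs⟩)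
          set b0 : Bool := decide (cl < fsum wl x) with hb0
          have hb0R : (Fin.snoc ε' b0 : Fin (m+1) → Bool) ∈ R := by
            refine mem_ReachSet.2 ⟨x, hxA, (sside_snoc ε' b0 x).2 ⟨hxs, ?_⟩⟩
            rcases lt_or_gt_of_ne hxl with h | h
            · have : b0 = false := by rw [hb0]; simp [not_lt.2 h.le]
              rw [this]; simpa [SSide] using h
            · have : b0 = true := by rw [hb0]; simp [h]
              rw [this]; simpa [SSide] using h
          have hset : R.filter (fun ε => Fin.init ε = ε') = {Fin.snoc ε' b0} := by
            ext ε
            simp only [Finset.mem_filter, Finset.mem_singleton]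
            constructor
            · rintro ⟨hεR, rfl⟩
              by_contra hne
              have hblast : ε (Fin.last m) ≠ b0 := by
                intro h
                have he : ε = Fin.snoc (Fin.init ε) (ε (Fin.last m)) :=
                  (Fin.snoc_init_self ε).symm
                exact hne (he.trans (by rw [h]))
              have hεR' : (Fin.snoc (Fin.init ε) (ε (Fin.last m)) : Fin (m+1) → Bool) ∈ R := by
                rw [Fin.snoc_init_self]; exact hεR
              have hbothR : (Fin.snoc (Fin.init ε) true : Fin (m+1) → Bool) ∈ R ∧
                  (Fin.snoc (Fin.init ε) false : Fin (m+1) → Bool) ∈ R := by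
                rcases Bool.dichotomy b0 with h0 | h0 <;>
                  rcases Bool.dichotomy (ε (Fin.last m)) with h1 | h1
                · rw [h0, h1] at hblast; exact absurd rfl hblast
                · rw [h0] at hb0R; rw [h1] at hεR'; exact ⟨hεR', hb0R⟩
                · rw [h0] at hb0R; rw [h1] at hεR'; exact ⟨hb0R, hεR'⟩
                · rw [h0, h1] at hblast; exact absurd rfl hblast
              exact hTm (hboth (Fin.init ε) hbothR.1 hbothR.2)
            · rintro rfl
              exact ⟨hb0R, Fin.init_snoc _ _⟩
          rw [hset, Finset.card_singleton]
      -- put it together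
      have hcount := Finset.card_eq_sum_card_fiberwise hmapsto
      rw [hcount]
      have hsum : ∑ ε' ∈ R', (R.filter (fun ε => Fin.init ε = ε')).card
          = ∑ ε' ∈ R', (if ε' ∈ T then 2 else 1) :=
        Finset.sum_congr rfl hfiber
      rw [hsum]
      have hsum2 : ∑ ε' ∈ R', (if ε' ∈ T then 2 else 1)
          = R'.card + T.card := by
        have : ∀ ε' ∈ R', (if ε' ∈ T then 2 else 1) = 1 + (if ε' ∈ T then 1 else 0) := by
          intro ε' _; split_ifs <;> rfl
        rw [Finset.sum_congr rfl this, Finset.sum_add_distrib, Finset.sum_const,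
          smul_eq_mul, mul_one, Finset.sum_ite_mem, Finset.inter_eq_right.2 hTsub,
          Finset.sum_const, smul_eq_mul, mul_one]
      rw [hsum2, hcardR', hkey.2, pascal_sum]

end Chambers

theorem num_chambers_general_position (d m : ℕ) (H : Fin m → Set (Fin d → ℝ))
    (hH : ∀ i, IsHyperplane (H i)) (hinj : Function.Injective H)
    (hgen : InGeneralPosition H) :
    (components ((⋃ i, H i)ᶜ)).ncard = ∑ i ∈ Finset.range (d + 1), m.choose i := by
  classical
  choose w hw0 hc using hH
  choose c hc using hc
  set S : Set (Fin d → ℝ) := (⋃ i, H i)ᶜ with hS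
  have hH' : ∀ i, H i = Chambers.Hset (w i) (c i) := hc
  set Cham : (Fin m → Bool) → Set (Fin d → ℝ) :=
    fun ε => {x | ∀ i, Chambers.SSide (ε i) (w i) (c i) x} with hCham
  have hCsub : ∀ ε, Cham ε ⊆ S := by
    intro ε x hx
    simp only [hS, Set.mem_compl_iff, Set.mem_iUnion, not_exists]
    intro i hxi
    rw [hH' i] at hxi
    have hs := hx i
    cases hb : ε i <;> rw [hb] at hs <;>
      simp only [Chambers.SSide, if_true, if_false, Bool.false_eq_true] at hs <;>
      rw [Chambers.Hset, Set.mem_setOf_eq] at hxi <;> linarith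
  have hsgn : ∀ x ∈ S, x ∈ Cham (fun i => decide (c i < Chambers.fsum (w i) x)) := by
    intro x hx i
    simp only [hS, Set.mem_compl_iff, Set.mem_iUnion, not_exists] at hx
    have hne : Chambers.fsum (w i) x ≠ c i := by
      intro h
      exact hx i (by rw [hH' i]; exact h)
    show Chambers.SSide (decide (c i < Chambers.fsum (w i) x)) (w i) (c i) x
    rcases lt_or_gt_of_ne hne with h | h
    · have hdec : decide (c i < Chambers.fsum (w i) x) = false := by simp [not_lt.2 h.le]
      rw [hdec]
      simpa [Chambers.SSide] using h
    · have hdec : decide (c i < Chambers.fsum (w i) x) = true := by simp [h]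
      rw [hdec]
      simpa [Chambers.SSide] using h
  have hCopen : ∀ ε, IsOpen (Cham ε) := by
    intro ε
    have : Cham ε = ⋂ i, {x | Chambers.SSide (ε i) (w i) (c i) x} := by
      ext x; simp [hCham, Set.mem_iInter]
    rw [this]
    exact isOpen_iInter_of_finite fun i => Chambers.isOpen_sside _ _ _
  have hCconv : ∀ ε, Convex ℝ (Cham ε) := by
    intro ε
    have : Cham ε = ⋂ i, {x | Chambers.SSide (ε i) (w i) (c i) x} := by
      ext x; simp [hCham, Set.mem_iInter]
    rw [this]
    exact convex_iInter fun i => Chambers.convex_sside _ _ _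
  have hdisj : ∀ ε ε', ε ≠ ε' → ∀ x, x ∈ Cham ε → x ∉ Cham ε' := by
    intro ε ε' hne x hx hx'
    apply hne
    funext i
    have h1 := hx i
    have h2 := hx' i
    cases hbe : ε i <;> cases hbe' : ε' i <;> rw [hbe] at h1 <;> rw [hbe'] at h2 <;>
      simp only [Chambers.SSide, if_true, if_false, Bool.false_eq_true] at h1 h2 <;>
      first
        | rfl
        | linarith
  have hcomp : ∀ x ∈ S, connectedComponentIn S x
      = Cham (fun i => decide (c i < Chambers.fsum (w i) x)) := by
    intro x hx
    set ε₀ : Fin m → Bool := fun i => decide (c i < Chambers.fsum (w i) x) with hε₀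
    have hxC : x ∈ Cham ε₀ := hsgn x hx
    apply Set.Subset.antisymm
    · set V : Set (Fin d → ℝ) := ⋃ (ε : Fin m → Bool) (_ : ε ≠ ε₀), Cham ε with hV
      have hVopen : IsOpen V := isOpen_iUnion fun ε => isOpen_iUnion fun _ => hCopen ε
      have hUV : Disjoint (Cham ε₀) V := by
        rw [Set.disjoint_left]
        intro y hy hyV
        simp only [hV, Set.mem_iUnion] at hyV
        obtain ⟨ε, hεne, hyε⟩ := hyV
        exact hdisj ε ε₀ hεne y hyε hy
      have hSsub : S ⊆ Cham ε₀ ∪ V := by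
        intro y hy
        by_cases h : (fun i => decide (c i < Chambers.fsum (w i) y)) = ε₀
        · left; rw [← h]; exact hsgn y hy
        · right
          simp only [hV, Set.mem_iUnion]
          exact ⟨_, h, hsgn y hy⟩
      have hpc : IsPreconnected (connectedComponentIn S x) := isPreconnected_connectedComponentIn
      have hsub : connectedComponentIn S x ⊆ S := connectedComponentIn_subset S x
      have hmem : x ∈ connectedComponentIn S x := mem_connectedComponentIn hx
      exact hpc.subset_left_of_subset_union (hCopen ε₀) hVopen hUV
        (hsub.trans hSsub) ⟨x, hmem, hxC⟩
    · exact ((hCconv ε₀).isPreconnected).subset_connectedComponentIn hxC (hCsub ε₀)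
  -- components S = image of Cham over nonempty chambers
  have hcomps : components S = Cham '' {ε | (Cham ε).Nonempty} := by
    ext C
    constructor
    · rintro ⟨x, hx, rfl⟩
      exact ⟨_, ⟨x, hsgn x hx⟩, (hcomp x hx).symm⟩
    · rintro ⟨ε, ⟨y, hy⟩, rfl⟩
      have hyS : y ∈ S := hCsub ε hy
      refine ⟨y, hyS, ?_⟩
      rw [hcomp y hyS]
      have : (fun i => decide (c i < Chambers.fsum (w i) y)) = ε := by
        by_contra hne
        exact hdisj _ ε hne y (hsgn y hyS) hy
      rw [this]
  rw [hcomps]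
  have hinjOn : Set.InjOn Cham {ε | (Cham ε).Nonempty} := by
    intro ε hε ε' hε' heq
    by_contra hne
    obtain ⟨y, hy⟩ := hε
    exact hdisj ε ε' hne y hy (heq ▸ hy)
  rw [Set.ncard_image_of_injOn hinjOn]
  have hGP : Chambers.GPon (⊤ : AffineSubspace ℝ (Fin d → ℝ)) d w c := by
    intro T
    constructor
    · intro hcard
      obtain ⟨A, hA, hne, hrk⟩ := (hgen T).1 hcard
      refine ⟨A, ?_, hne, hrk⟩
      rw [hA, AffineSubspace.top_coe, Set.univ_inter]
      exact Set.iInter₂_congr fun i _ => hH' i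
    · intro hcard
      rw [AffineSubspace.top_coe, Set.univ_inter]
      rw [← Set.iInter₂_congr fun i (_ : i ∈ T) => hH' i]
      exact (hgen T).2 hcard
  have hfin : {ε | (Cham ε).Nonempty}
      = ↑(Chambers.ReachSet ((⊤ : AffineSubspace ℝ (Fin d → ℝ)) : Set (Fin d → ℝ)) w c) := by
    ext ε
    constructor
    · rintro ⟨y, hy⟩
      exact Finset.mem_coe.2 (Chambers.mem_ReachSet.2 ⟨y, AffineSubspace.mem_top ℝ _ y, hy⟩)
    · intro h
      obtain ⟨y, -, hy⟩ := Chambers.mem_ReachSet.1 (Finset.mem_coe.1 h)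
      exact ⟨y, hy⟩
  rw [hfin, Set.ncard_coe_finset]
  exact Chambers.count m d ⊤ w c hGP
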